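/- For matrices Θ, Θ̂₁, Θ̂₂ of the same size, the projected rank bound holds: rank(Pr_Θ[Θ̂₁ − Θ]) ≤ 2·rank(Θ), where Pr_Θ(B) = B − P_{S1(Θ)⊥} B P_{S2(Θ)⊥}. -/

import Mathlib

open scoped BigOperators Matrix

noncomputable def frob {m n : Type*} [Fintype m] [Fintype n] (A : Matrix m n ℝ) : ℝ :=
  Real.sqrt (∑ i, ∑ j, (A i j)^2)

noncomputable def opNorm {m n : Type*} [Fintype m] [Fintype n] [DecidableEq m] [DecidableEq n]
    (A : Matrix m n ℝ) : ℝ :=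
  ‖LinearMap.toContinuousLinearMap (Matrix.toEuclideanLin A)‖

noncomputable def nuclearNorm {m n : Type*} [Fintype m] [Fintype n] [DecidableEq n]
    (A : Matrix m n ℝ) : ℝ :=
  ∑ i, Real.sqrt ((show (A.transpose * A).IsHermitian by
    simpa [Matrix.conjTranspose_eq_transpose_of_trivial] using
      Matrix.isHermitian_conjTranspose_mul_self A).eigenvalues i)

noncomputable def colSpace {m n : Type*} [Fintype m] [Fintype n] [DecidableEq n]
    (A : Matrix m n ℝ) : Submodule ℝ (EuclideanSpace ℝ m) :=
  LinearMap.range (Matrix.toEuclideanLin A)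

noncomputable def projMat {m : Type*} [Fintype m] [DecidableEq m]
    (S : Submodule ℝ (EuclideanSpace ℝ m)) : Matrix m m ℝ :=
  Matrix.toEuclideanLin.symm (S.subtype ∘ₗ (S.orthogonalProjectionOnto).toLinearMap)

noncomputable def PrPerp {m n : Type*} [Fintype m] [Fintype n] [DecidableEq m] [DecidableEq n]
    (A B : Matrix m n ℝ) : Matrix m n ℝ :=
  projMat (colSpace A).orthogonal * B * projMat (colSpace A.transpose).orthogonal

noncomputable def Pr {m n : Type*} [Fintype m] [Fintype n] [DecidableEq m] [DecidableEq n]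
    (A B : Matrix m n ℝ) : Matrix m n ℝ :=
  B - PrPerp A B

noncomputable def maxEig {k : Type*} [Fintype k] [DecidableEq k] (M : Matrix k k ℝ) : ℝ :=
  sSup (spectrum ℝ M)
noncomputable def minEig {k : Type*} [Fintype k] [DecidableEq k] (M : Matrix k k ℝ) : ℝ :=
  sInf (spectrum ℝ M)
noncomputable def condNum {k : Type*} [Fintype k] [DecidableEq k] (M : Matrix k k ℝ) : ℝ :=
  maxEig M / minEig M

section Aux

variable {m n : Type*} [Fintype m] [Fintype n] [DecidableEq m] [DecidableEq n]

lemma aux_rank_add_le (A B : Matrix m n ℝ) : (A + B).rank ≤ A.rank + B.rank := by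
  simp only [Matrix.rank]
  have h : LinearMap.range (A + B).mulVecLin ≤
      LinearMap.range A.mulVecLin ⊔ LinearMap.range B.mulVecLin := by
    rintro x ⟨v, rfl⟩
    exact Submodule.mem_sup.2 ⟨A.mulVecLin v, ⟨v, rfl⟩, B.mulVecLin v, ⟨v, rfl⟩, by
      simp [Matrix.add_mulVec]⟩
  exact (Submodule.finrank_mono h).trans
    (Submodule.finrank_add_le_finrank_add_finrank _ _)

lemma rank_eq_finrank_range_euclidean (A : Matrix m n ℝ) :
    A.rank = Module.finrank ℝ (LinearMap.range (Matrix.toEuclideanLin A)) := by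
  rw [Matrix.rank_eq_finrank_range_toLin A (PiLp.basisFun 2 ℝ m) (PiLp.basisFun 2 ℝ n)]
  rfl

lemma toEuclideanLin_projMat (S : Submodule ℝ (EuclideanSpace ℝ m)) :
    Matrix.toEuclideanLin (projMat S) =
      S.subtype ∘ₗ (S.orthogonalProjectionOnto).toLinearMap := by
  simp [projMat]

lemma rank_projMat (S : Submodule ℝ (EuclideanSpace ℝ m)) :
    (projMat S).rank = Module.finrank ℝ S := by
  rw [rank_eq_finrank_range_euclidean, toEuclideanLin_projMat]
  have hr : LinearMap.range (S.subtype ∘ₗ (S.orthogonalProjectionOnto).toLinearMap) = S := by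
    apply le_antisymm
    · rintro x ⟨v, rfl⟩
      exact (S.orthogonalProjectionOnto v).2
    · intro x hx
      exact ⟨x, by simp [Submodule.starProjection_eq_self_iff.2 hx]⟩
  rw [hr]

lemma projMat_orthogonal (S : Submodule ℝ (EuclideanSpace ℝ m)) :
    projMat Sᗮ = 1 - projMat S := by
  apply Matrix.toEuclideanLin.injective
  rw [map_sub, toEuclideanLin_projMat, toEuclideanLin_projMat]
  have h1 : Matrix.toEuclideanLin (1 : Matrix m m ℝ) = LinearMap.id := by
    rw [Matrix.toEuclideanLin_eq_toLin, Matrix.toLin_one]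
  rw [h1]
  ext v i
  have h := Submodule.starProjection_add_starProjection_orthogonal (K := S) v
  simp only [LinearMap.sub_apply, LinearMap.id_apply, LinearMap.coe_comp,
    Function.comp_apply, Submodule.coe_subtype, ContinuousLinearMap.coe_coe]
  have h' : (S.orthogonalProjectionOnto v : EuclideanSpace ℝ m) i
      + (Sᗮ.orthogonalProjectionOnto v : EuclideanSpace ℝ m) i = v i := by
    simpa using congrFun (congrArg (fun x : EuclideanSpace ℝ m => (x : m → ℝ)) h) i
  simp only [PiLp.sub_apply]
  linarith

end Aux

/-- rank(Pr_Θ[Θ̂₁ − Θ]) ≤ 2·rank(Θ). -/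
theorem rank_proj_le_two_rank {p : ℕ}
    (Θ Θhat₁ Θhat₂ : Matrix (Fin p) (Fin p) ℝ) :
    (Pr Θ (Θhat₁ - Θ)).rank ≤ 2 * Θ.rank := by
  set B := Θhat₁ - Θ
  set P := projMat (colSpace Θ)
  set Q := projMat (colSpace Θᵀ)
  have hP : projMat (colSpace Θ)ᗮ = 1 - P := projMat_orthogonal _
  have hQ : projMat (colSpace Θᵀ)ᗮ = 1 - Q := projMat_orthogonal _
  have hPr : Pr Θ B = P * B + (1 - P) * B * Q := by
    simp only [Pr, PrPerp]
    rw [hP, hQ]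
    noncomm_ring
  have hrP : P.rank = Θ.rank := by
    rw [rank_projMat]; exact (rank_eq_finrank_range_euclidean Θ).symm
  have hrQ : Q.rank = Θ.rank := by
    rw [rank_projMat]
    exact (rank_eq_finrank_range_euclidean Θᵀ).symm.trans (Matrix.rank_transpose Θ)
  calc (Pr Θ B).rank ≤ (P * B).rank + ((1 - P) * B * Q).rank := by
        rw [hPr]; exact aux_rank_add_le _ _
    _ ≤ P.rank + Q.rank :=
        add_le_add (Matrix.rank_mul_le_left _ _) (Matrix.rank_mul_le_right _ _)
    _ = 2 * Θ.rank := by rw [hrP, hrQ]; ring
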